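/- A nonnegative random variable X has the half-normal distribution (the law of |Z| for Z standard normal) if and only if E[f'(X)] = E[X f(X)] - f(0)·sqrt(2/π) for all functions f : [0,∞) → ℝ that are absolutely continuous on every compact subinterval of [0,∞) and satisfy E|f'(|Z|)| < ∞. -/

import Mathlib

open MeasureTheory ProbabilityTheory Real Set
open scoped ENNReal NNReal

noncomputable section SteinHalf

namespace SteinHalf

def phi (x : ℝ) : ℝ := Real.exp (-x^2/2)

lemma phi_cont : Continuous phi := by
  unfold phi; fun_prop

lemma phi_pos (x : ℝ) : 0 < phi x := Real.exp_pos _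

lemma phi_integrable : Integrable phi := by
  have : Integrable fun x : ℝ => Real.exp (-(1/2) * x^2) := integrable_exp_neg_mul_sq (by norm_num)
  refine this.congr (by filter_upwards with x; unfold phi; ring_nf)

lemma xphi_integrable : Integrable (fun x : ℝ => x * phi x) := by
  have : Integrable fun x : ℝ => x * Real.exp (-(1/2) * x^2) :=
    integrable_mul_exp_neg_mul_sq (by norm_num)
  refine this.congr (by filter_upwards with x; unfold phi; ring_nf)

lemma negphi_hasDeriv (y : ℝ) : HasDerivAt (fun t => -phi t) (y * phi y) y := by
  have h1 : HasDerivAt (fun t : ℝ => -t^2/2) (-(2*y)/2) y :=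
    ((hasDerivAt_pow 2 y).neg).div_const 2 |>.congr_deriv (by ring)
  have := (h1.exp).neg
  refine this.congr_deriv ?_
  show -(Real.exp (-y^2/2) * (-(2*y)/2)) = y * phi y
  unfold phi; ring

lemma phi_tendsto : Filter.Tendsto (fun t => -phi t) Filter.atTop (nhds 0) := by
  rw [show (0:ℝ) = -0 by ring]
  refine Filter.Tendsto.neg ?_
  unfold phi
  have : Filter.Tendsto (fun t : ℝ => -t^2/2) Filter.atTop Filter.atBot := by
    apply Filter.Tendsto.atBot_div_const (by norm_num)
    exact Filter.tendsto_neg_atBot_iff.mpr (Filter.tendsto_pow_atTop (two_ne_zero))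
  exact Real.tendsto_exp_atBot.comp this

lemma integral_xphi (x : ℝ) : ∫ t in Ioi x, t * phi t = phi x := by
  have := integral_Ioi_of_hasDerivAt_of_tendsto' (f := fun t => -phi t)
    (f' := fun t => t * phi t) (a := x) (fun y _ => negphi_hasDeriv y)
    (xphi_integrable.integrableOn) phi_tendsto
  simpa using this

end SteinHalf

section SteinHalf2
namespace SteinHalf

lemma pdf_eq (x : ℝ) : gaussianPDFReal 0 1 x = (Real.sqrt (2*π))⁻¹ * phi x := by
  simp [gaussianPDFReal, phi]

lemma pdf_abs (x : ℝ) : gaussianPDFReal 0 1 |x| = gaussianPDFReal 0 1 x := by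
  rw [pdf_eq, pdf_eq, phi, phi, sq_abs]

lemma integral_gauss (g : ℝ → ℝ) :
    ∫ z, g z ∂(gaussianReal 0 1) = ∫ z, gaussianPDFReal 0 1 z * g z := by
  rw [gaussianReal_of_var_ne_zero 0 one_ne_zero]
  have hmeas : Measurable (fun x => (gaussianPDFReal 0 1 x).toNNReal) :=
    (measurable_gaussianPDFReal 0 1).real_toNNReal
  have : volume.withDensity (gaussianPDF 0 1)
      = volume.withDensity (fun x => ((gaussianPDFReal 0 1 x).toNNReal : ℝ≥0∞)) := rfl
  rw [this, integral_withDensity_eq_integral_smul hmeas]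
  refine integral_congr_ae (Filter.Eventually.of_forall fun x => ?_)
  simp [NNReal.smul_def, Real.coe_toNNReal _ (gaussianPDFReal_nonneg 0 1 x)]

lemma integrable_gauss_iff (g : ℝ → ℝ) :
    Integrable g (gaussianReal 0 1) ↔ Integrable (fun z => gaussianPDFReal 0 1 z * g z) := by
  rw [gaussianReal_of_var_ne_zero 0 one_ne_zero]
  have hmeas : Measurable (fun x => (gaussianPDFReal 0 1 x).toNNReal) :=
    (measurable_gaussianPDFReal 0 1).real_toNNReal
  have h1 : volume.withDensity (gaussianPDF 0 1)
      = volume.withDensity (fun x => ((gaussianPDFReal 0 1 x).toNNReal : ℝ≥0∞)) := rfl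
  rw [h1, integrable_withDensity_iff_integrable_smul hmeas]
  constructor <;> intro h <;> refine h.congr (Filter.Eventually.of_forall fun x => ?_) <;>
    simp [NNReal.smul_def, Real.coe_toNNReal _ (gaussianPDFReal_nonneg 0 1 x)]

lemma integral_gauss_abs (g : ℝ → ℝ) :
    ∫ z, g |z| ∂(gaussianReal 0 1) = 2 * ∫ x in Ioi (0:ℝ), gaussianPDFReal 0 1 x * g x := by
  rw [integral_gauss]
  calc ∫ z, gaussianPDFReal 0 1 z * g |z|
      = ∫ z, (fun x => gaussianPDFReal 0 1 x * g x) |z| := by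
        refine integral_congr_ae (Filter.Eventually.of_forall fun z => ?_)
        simp only
        rw [pdf_abs]
    _ = 2 * ∫ x in Ioi (0:ℝ), gaussianPDFReal 0 1 x * g x := integral_comp_abs (f := fun x => gaussianPDFReal 0 1 x * g x)

end SteinHalf
end SteinHalf2

namespace SteinHalf

lemma integrable_comp_abs {F : ℝ → ℝ} (h : IntegrableOn F (Ioi (0:ℝ))) :
    Integrable (fun x => F |x|) := by
  have int_Ioi : IntegrableOn (fun x => F |x|) (Ioi (0:ℝ)) :=
    h.congr_fun (fun x hx => by rw [abs_of_pos hx]) measurableSet_Ioi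
  have int_Iic : IntegrableOn (fun x => F |x|) (Iic (0:ℝ)) := by
    rw [← Measure.map_neg_eq_self (volume : Measure ℝ)]
    have m : MeasurableEmbedding fun x : ℝ => -x := (Homeomorph.neg ℝ).measurableEmbedding
    rw [m.integrableOn_map_iff]
    simp_rw [Function.comp_def, abs_neg, neg_preimage, neg_Iic, neg_zero]
    exact (integrableOn_Ici_iff_integrableOn_Ioi).mpr int_Ioi
  have := int_Iic.union int_Ioi
  rwa [Iic_union_Ioi, integrableOn_univ] at this

lemma gauss_integrable_abs_iff (g : ℝ → ℝ) :
    Integrable (fun z => g |z|) (gaussianReal 0 1) ↔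
      IntegrableOn (fun x => gaussianPDFReal 0 1 x * g x) (Ioi (0:ℝ)) := by
  rw [integrable_gauss_iff]
  constructor
  · intro h
    exact (h.integrableOn (s := Ioi 0)).congr_fun
      (fun x hx => by dsimp only; rw [abs_of_pos hx]) measurableSet_Ioi
  · intro h
    have := integrable_comp_abs h
    refine this.congr (Filter.Eventually.of_forall fun x => ?_)
    simp only
    rw [pdf_abs]

end SteinHalf

namespace SteinHalf

lemma fubini_primitive {h : ℝ → ℝ}
    (hm : AEStronglyMeasurable h (volume.restrict (Ioi (0:ℝ))))
    (hint : IntegrableOn (fun x => h x * phi x) (Ioi (0:ℝ))) :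
    IntegrableOn (fun t => (∫ x in (0:ℝ)..t, h x) * (t * phi t)) (Ioi (0:ℝ)) ∧
    ∫ t in Ioi (0:ℝ), (∫ x in (0:ℝ)..t, h x) * (t * phi t) = ∫ x in Ioi (0:ℝ), h x * phi x := by
  set μ1 : Measure ℝ := volume.restrict (Ioi (0:ℝ)) with hμ1
  set P : ℝ × ℝ → ℝ := fun p => (Ioi p.1).indicator (fun t => h p.1 * (t * phi t)) p.2 with hP
  -- a.e. strong measurability of P
  have hmem : ∀ᵐ p ∂(μ1.prod μ1), h p.1 = (hm.mk h) p.1 := by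
    set s := {x | h x ≠ hm.mk h x} with hs
    have hs0 : μ1 s = 0 := hm.ae_eq_mk
    have : (μ1.prod μ1) (toMeasurable μ1 s ×ˢ (univ : Set ℝ)) = 0 := by
      rw [Measure.prod_prod, measure_toMeasurable, hs0, zero_mul]
    refine measure_mono_null (fun p hp => ?_) this
    exact ⟨subset_toMeasurable _ _ hp, mem_univ _⟩
  have hPeq : ∀ p : ℝ × ℝ, h p.1 = hm.mk h p.1 →
      P p = ({q : ℝ × ℝ | q.1 < q.2}).indicator (fun q => hm.mk h q.1 * (q.2 * phi q.2)) p := by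
    intro p hp
    simp only [hP, Set.indicator_apply, mem_Ioi, mem_setOf_eq, hp]
  have hPm : AEStronglyMeasurable P (μ1.prod μ1) := by
    refine AEStronglyMeasurable.congr (f := fun p =>
      ({q : ℝ × ℝ | q.1 < q.2}).indicator (fun q => hm.mk h q.1 * (q.2 * phi q.2)) p) ?_ ?_
    · refine (Measurable.indicator ?_ ?_).aestronglyMeasurable
      · exact ((hm.measurable_mk.comp measurable_fst).mul
          (measurable_snd.mul (phi_cont.measurable.comp measurable_snd)))
      · exact measurableSet_lt measurable_fst measurable_snd
    · filter_upwards [hmem] with p hp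
      exact (hPeq p hp).symm
  -- integrability of P
  have hslice : ∀ x : ℝ, Integrable (fun t => P (x, t)) μ1 := by
    intro x
    have : Integrable (fun t => h x * (t * phi t)) volume := xphi_integrable.const_mul _
    rw [hP]
    simp only
    rw [integrable_indicator_iff measurableSet_Ioi]
    exact this.mono_measure (le_trans Measure.restrict_le_self Measure.restrict_le_self)
  have hnormint : ∀ᵐ x ∂μ1, ∫ t, ‖P (x, t)‖ ∂μ1 = |h x| * phi x := by
    filter_upwards [ae_restrict_mem measurableSet_Ioi] with x hx
    have h1 : ∀ t : ℝ, ‖P (x, t)‖ = (Ioi x).indicator (fun t => ‖h x * (t * phi t)‖) t := by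
      intro t
      rw [hP]
      simp only
      rw [norm_indicator_eq_indicator_norm]
    calc ∫ t, ‖P (x, t)‖ ∂μ1 = ∫ t, (Ioi x).indicator (fun t => ‖h x * (t * phi t)‖) t ∂μ1 := by
          exact integral_congr_ae (Filter.Eventually.of_forall h1)
      _ = ∫ t in Ioi x, ‖h x * (t * phi t)‖ ∂μ1 := integral_indicator measurableSet_Ioi
      _ = ∫ t in Ioi x ∩ Ioi 0, ‖h x * (t * phi t)‖ := by
          rw [hμ1, Measure.restrict_restrict measurableSet_Ioi]
      _ = ∫ t in Ioi x, ‖h x * (t * phi t)‖ := by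
          rw [inter_eq_left.mpr (Ioi_subset_Ioi (le_of_lt hx))]
      _ = ∫ t in Ioi x, |h x| * (t * phi t) := by
          refine setIntegral_congr_fun measurableSet_Ioi (fun t ht => ?_)
          have htpos : 0 < t := lt_trans hx ht
          rw [norm_mul, Real.norm_eq_abs, Real.norm_eq_abs,
            abs_of_pos (mul_pos htpos (phi_pos t))]
      _ = |h x| * ∫ t in Ioi x, t * phi t := integral_const_mul _ _
      _ = |h x| * phi x := by rw [integral_xphi]
  have hPint : Integrable P (μ1.prod μ1) := by
    rw [integrable_prod_iff hPm]
    constructor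
    · exact Filter.Eventually.of_forall fun x => hslice x
    · have h2 : Integrable (fun x => |h x| * phi x) μ1 := hint.norm.congr (by
        filter_upwards with x
        rw [norm_mul, Real.norm_eq_abs, Real.norm_eq_abs, abs_of_pos (phi_pos x)])
      exact h2.congr (hnormint.mono fun x hx => hx.symm)
  -- inner integrals
  have hinner1 : ∀ᵐ x ∂μ1, ∫ t, P (x, t) ∂μ1 = h x * phi x := by
    filter_upwards [ae_restrict_mem measurableSet_Ioi] with x hx
    calc ∫ t, P (x, t) ∂μ1 = ∫ t in Ioi x, h x * (t * phi t) ∂μ1 :=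
          integral_indicator measurableSet_Ioi
      _ = ∫ t in Ioi x ∩ Ioi 0, h x * (t * phi t) := by
          rw [hμ1, Measure.restrict_restrict measurableSet_Ioi]
      _ = ∫ t in Ioi x, h x * (t * phi t) := by
          rw [inter_eq_left.mpr (Ioi_subset_Ioi (le_of_lt hx))]
      _ = h x * ∫ t in Ioi x, t * phi t := integral_const_mul _ _
      _ = h x * phi x := by rw [integral_xphi]
  have hinner2 : ∀ᵐ t ∂μ1, ∫ x, P (x, t) ∂μ1 = (∫ x in (0:ℝ)..t, h x) * (t * phi t) := by
    filter_upwards [ae_restrict_mem measurableSet_Ioi] with t ht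
    have hPx : ∀ x : ℝ, P (x, t) = (Iio t).indicator (fun x => h x * (t * phi t)) x := by
      intro x
      simp only [hP, Set.indicator_apply, mem_Ioi, mem_Iio]
    calc ∫ x, P (x, t) ∂μ1 = ∫ x, (Iio t).indicator (fun x => h x * (t * phi t)) x ∂μ1 :=
          integral_congr_ae (Filter.Eventually.of_forall hPx)
      _ = ∫ x in Iio t, h x * (t * phi t) ∂μ1 := integral_indicator measurableSet_Iio
      _ = ∫ x in Iio t ∩ Ioi 0, h x * (t * phi t) := by
          rw [hμ1, Measure.restrict_restrict measurableSet_Iio]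
      _ = ∫ x in Ioo 0 t, h x * (t * phi t) := by rw [Iio_inter_Ioi]
      _ = (∫ x in Ioo (0:ℝ) t, h x) * (t * phi t) := integral_mul_const _ _
      _ = (∫ x in Ioc (0:ℝ) t, h x) * (t * phi t) := by rw [← integral_Ioc_eq_integral_Ioo]
      _ = (∫ x in (0:ℝ)..t, h x) * (t * phi t) := by
          rw [intervalIntegral.integral_of_le (le_of_lt ht)]
  have hswap := integral_integral_swap (f := fun x t => P (x, t)) hPint
  refine ⟨hPint.integral_prod_right.congr hinner2, ?_⟩
  calc ∫ t in Ioi (0:ℝ), (∫ x in (0:ℝ)..t, h x) * (t * phi t)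
      = ∫ t, (∫ x, P (x, t) ∂μ1) ∂μ1 := (integral_congr_ae hinner2).symm
    _ = ∫ x, (∫ t, P (x, t) ∂μ1) ∂μ1 := hswap.symm
    _ = ∫ x in Ioi (0:ℝ), h x * phi x := integral_congr_ae hinner1

end SteinHalf

namespace SteinHalf

lemma two_inv_sqrt : 2 * (Real.sqrt (2*π))⁻¹ = Real.sqrt (2/π) := by
  have h2 : (0:ℝ) < 2 := by norm_num
  have hπ : (0:ℝ) < π := Real.pi_pos
  have hs2 : (0:ℝ) < Real.sqrt 2 := Real.sqrt_pos.mpr h2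
  have hsπ : (0:ℝ) < Real.sqrt π := Real.sqrt_pos.mpr hπ
  rw [Real.sqrt_div h2.le, Real.sqrt_mul h2.le]
  rw [eq_div_iff hsπ.ne']
  field_simp
  nlinarith [Real.mul_self_sqrt h2.le, Real.mul_self_sqrt hπ.le]

end SteinHalf

namespace SteinHalf

lemma abs_preimage_null {s : Set ℝ} (hs : volume s = 0) :
    volume ((fun x : ℝ => |x|) ⁻¹' s) = 0 := by
  set t := toMeasurable volume s with htdef
  have htm : MeasurableSet t := measurableSet_toMeasurable _ _
  have ht0 : volume t = 0 := by rw [measure_toMeasurable]; exact hs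
  have hneg : volume (Neg.neg ⁻¹' t) = 0 := by
    have := Measure.map_neg_eq_self (volume : Measure ℝ)
    calc volume (Neg.neg ⁻¹' t) = (volume.map Neg.neg) t := (Measure.map_apply measurable_neg htm).symm
      _ = volume t := by rw [this]
      _ = 0 := ht0
  refine measure_mono_null (fun x hx => ?_) (measure_union_null ht0 hneg)
  have : |x| ∈ t := subset_toMeasurable _ _ hx
  rcases abs_choice x with h | h
  · exact Or.inl (h ▸ this)
  · exact Or.inr (show -x ∈ t from h ▸ this)

lemma map_abs_ac : (gaussianReal 0 1).map (fun z => |z|) ≪ (volume : Measure ℝ) := by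
  have hγ : gaussianReal 0 1 ≪ volume := gaussianReal_absolutelyContinuous 0 one_ne_zero
  refine Measure.AbsolutelyContinuous.mk (fun s hsm hs => ?_)
  rw [Measure.map_apply measurable_abs hsm]
  exact hγ (abs_preimage_null hs)

lemma map_abs_nonneg : ∀ᵐ x ∂((gaussianReal 0 1).map (fun z => |z|)), 0 ≤ x := by
  rw [ae_iff]
  have : {x : ℝ | ¬ 0 ≤ x} = Iio 0 := by ext x; simp
  rw [this, Measure.map_apply measurable_abs measurableSet_Iio]
  have : (fun z : ℝ => |z|) ⁻¹' Iio 0 = ∅ := by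
    ext z; simp [abs_nonneg]
  rw [this, measure_empty]

lemma f'_aesm {f' : ℝ → ℝ} (hI : ∀ a b : ℝ, IntervalIntegrable f' volume a b) :
    AEStronglyMeasurable f' (volume : Measure ℝ) := by
  have hu : (⋃ n : ℕ, Ioc (-(n:ℝ)) (n:ℝ)) = univ := by
    ext x
    simp only [mem_iUnion, mem_Ioc, mem_univ, iff_true]
    obtain ⟨n, hn⟩ := exists_nat_gt |x| 
    exact ⟨n, by cases abs_lt.mp hn; constructor <;> linarith⟩
  have : AEStronglyMeasurable f' (volume.restrict (⋃ n : ℕ, Ioc (-(n:ℝ)) (n:ℝ))) := by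
    rw [aestronglyMeasurable_iUnion_iff]
    intro n
    exact (hI (-(n:ℝ)) (n:ℝ)).1.aestronglyMeasurable
  rwa [hu, Measure.restrict_univ] at this

lemma forward (f f' : ℝ → ℝ)
    (hI : ∀ a b : ℝ, IntervalIntegrable f' volume a b)
    (hFTC : ∀ x : ℝ, 0 ≤ x → f x = f 0 + ∫ t in (0:ℝ)..x, f' t)
    (hInt : Integrable (fun z => f' |z|) (gaussianReal 0 1)) :
    ∫ x, f' x ∂((gaussianReal 0 1).map (fun z => |z|)) =
      (∫ x, x * f x ∂((gaussianReal 0 1).map (fun z => |z|))) - f 0 * Real.sqrt (2/π) := by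
  set μ : Measure ℝ := (gaussianReal 0 1).map (fun z => |z|) with hμdef
  have hasm := f'_aesm hI
  set h : ℝ → ℝ := hasm.mk f' with hhdef
  have hhm : StronglyMeasurable h := hasm.stronglyMeasurable_mk
  have hfh : f' =ᵐ[volume] h := hasm.ae_eq_mk
  have hγac : gaussianReal 0 1 ≪ volume := gaussianReal_absolutelyContinuous 0 one_ne_zero
  have hμac : μ ≪ volume := map_abs_ac
  -- f' = h a.e. for μ and for gaussian ∘ abs
  have hfhμ : f' =ᵐ[μ] h := hμac.ae_le hfh
  have habs : (fun z => f' |z|) =ᵐ[gaussianReal 0 1] (fun z => h |z|) := by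
    have h0 : volume {x | f' x ≠ h x} = 0 := hfh
    have := hγac (abs_preimage_null h0)
    refine measure_mono_null (fun z hz => ?_) this
    exact hz
  -- intervalIntegrable for h, same interval integrals
  have hIh : ∀ a b : ℝ, IntervalIntegrable h volume a b := fun a b => (hI a b).congr_ae (Filter.EventuallyEq.filter_mono hfh (ae_mono Measure.restrict_le_self))
  have hppeq : ∀ x : ℝ, ∫ t in (0:ℝ)..x, f' t = ∫ t in (0:ℝ)..x, h t := by
    intro x
    refine intervalIntegral.integral_congr_ae ?_
    filter_upwards [hfh] with t ht _
    exact ht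
  set F : ℝ → ℝ := fun x => f 0 + ∫ t in (0:ℝ)..x, h t with hFdef
  have hFcont : Continuous F :=
    continuous_const.add (intervalIntegral.continuous_primitive hIh 0)
  have hfFμ : ∀ᵐ x ∂μ, f x = F x := by
    filter_upwards [map_abs_nonneg] with x hx
    rw [hFTC x hx, hFdef]
    simp only
    rw [hppeq]
  -- pass integrals to gaussian side
  have hgoal1 : ∫ x, f' x ∂μ = ∫ z, h |z| ∂(gaussianReal 0 1) := by
    rw [integral_congr_ae hfhμ, hμdef,
      integral_map measurable_abs.aemeasurable hhm.aestronglyMeasurable]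
  have hcongr2 : ∀ᵐ x ∂μ, x * f x = x * F x := by
    filter_upwards [hfFμ] with x hx; rw [hx]
  have hgoal2 : ∫ x, x * f x ∂μ
      = 2 * ∫ x in Ioi (0:ℝ), gaussianPDFReal 0 1 x * (x * F x) := by
    rw [integral_congr_ae hcongr2, hμdef,
      integral_map measurable_abs.aemeasurable
        ((by fun_prop : Continuous fun x : ℝ => x * F x).aestronglyMeasurable)]
    exact integral_gauss_abs (fun x => x * F x)
  set C : ℝ := (Real.sqrt (2*π))⁻¹ with hCdef
  have hCpos : 0 < C := by
    rw [hCdef]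
    exact inv_pos.mpr (Real.sqrt_pos.mpr (by positivity))
  have hInt_h : Integrable (fun z => h |z|) (gaussianReal 0 1) := hInt.congr habs
  have hint_pdf : IntegrableOn (fun x => gaussianPDFReal 0 1 x * h x) (Ioi (0:ℝ)) :=
    (gauss_integrable_abs_iff h).mp hInt_h
  have hpdfC : ∀ x : ℝ, gaussianPDFReal 0 1 x * h x = C * (h x * phi x) := by
    intro x; rw [pdf_eq, ← hCdef]; ring
  have hint_hphi : IntegrableOn (fun x => h x * phi x) (Ioi (0:ℝ)) := by
    refine (hint_pdf.const_mul C⁻¹).congr ?_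
    refine Filter.Eventually.of_forall fun x => ?_
    simp only
    rw [hpdfC x, ← mul_assoc, inv_mul_cancel₀ hCpos.ne', one_mul]
  obtain ⟨hAint, hAeq⟩ :=
    fubini_primitive (hhm.aestronglyMeasurable.restrict) hint_hphi
  -- LHS
  have hLHS : ∫ x, f' x ∂μ = 2 * C * ∫ x in Ioi (0:ℝ), h x * phi x := by
    rw [hgoal1, integral_gauss_abs]
    rw [show ∫ x in Ioi (0:ℝ), gaussianPDFReal 0 1 x * h x
        = ∫ x in Ioi (0:ℝ), C * (h x * phi x) from
      integral_congr_ae (Filter.Eventually.of_forall fun x => hpdfC x)]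
    rw [integral_const_mul]
    ring
  -- RHS
  have hRHS : ∫ x, x * f x ∂μ
      = 2 * C * (f 0 + ∫ x in Ioi (0:ℝ), h x * phi x) := by
    rw [hgoal2]
    have hsplit : ∀ x : ℝ, gaussianPDFReal 0 1 x * (x * F x)
        = C * (f 0 * (x * phi x) + (∫ t in (0:ℝ)..x, h t) * (x * phi x)) := by
      intro x
      rw [pdf_eq, ← hCdef, hFdef]
      simp only
      ring
    rw [show ∫ x in Ioi (0:ℝ), gaussianPDFReal 0 1 x * (x * F x)
        = ∫ x in Ioi (0:ℝ),
          C * (f 0 * (x * phi x) + (∫ t in (0:ℝ)..x, h t) * (x * phi x)) from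
      integral_congr_ae (Filter.Eventually.of_forall fun x => hsplit x)]
    rw [integral_const_mul]
    rw [integral_add ((xphi_integrable.const_mul (f 0)).integrableOn) hAint]
    rw [integral_const_mul, hAeq, integral_xphi 0]
    have : phi 0 = 1 := by simp [phi]
    rw [this]
    ring
  rw [hLHS, hRHS, ← two_inv_sqrt, ← hCdef]
  ring

end SteinHalf

namespace SteinHalf

def Q (x : ℝ) : ℝ := ∫ s in Ioi x, phi s

lemma Q_eq (x : ℝ) : Q x = Q 0 - ∫ s in (0:ℝ)..x, phi s := by
  rcases le_or_gt 0 x with hx | hx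
  · rw [intervalIntegral.integral_of_le hx]
    have hsplit : ∫ s in Ioi (0:ℝ), phi s
        = (∫ s in Ioc (0:ℝ) x, phi s) + ∫ s in Ioi x, phi s := by
      rw [← setIntegral_union (Ioc_disjoint_Ioi le_rfl) measurableSet_Ioi
        (phi_integrable.integrableOn) (phi_integrable.integrableOn),
        Ioc_union_Ioi_eq_Ioi hx]
    rw [Q, Q, hsplit]; ring
  · rw [intervalIntegral.integral_symm, intervalIntegral.integral_of_le hx.le]
    have hsplit : ∫ s in Ioi x, phi s
        = (∫ s in Ioc x 0, phi s) + ∫ s in Ioi (0:ℝ), phi s := by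
      rw [← setIntegral_union (Ioc_disjoint_Ioi le_rfl) measurableSet_Ioi
        (phi_integrable.integrableOn) (phi_integrable.integrableOn),
        Ioc_union_Ioi_eq_Ioi hx.le]
    rw [Q, Q, hsplit]; ring

lemma Q_hasDeriv (x : ℝ) : HasDerivAt Q (-phi x) x := by
  have hprim : HasDerivAt (fun y => ∫ s in (0:ℝ)..y, phi s) (phi x) x := by
    refine intervalIntegral.integral_hasDerivAt_right
      (phi_integrable.intervalIntegrable)
      (phi_cont.stronglyMeasurable.stronglyMeasurableAtFilter) phi_cont.continuousAt
  have := (hprim.const_sub (Q 0))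
  refine HasDerivAt.congr_of_eventuallyEq ?_ (Filter.Eventually.of_forall fun y => (Q_eq y)) 
  simpa using this

lemma Q_cont : Continuous Q := by
  have : Continuous fun y => ∫ s in (0:ℝ)..y, phi s :=
    intervalIntegral.continuous_primitive (fun a b => phi_integrable.intervalIntegrable) 0
  have h2 : Continuous fun y => Q 0 - ∫ s in (0:ℝ)..y, phi s := continuous_const.sub this
  refine h2.congr fun y => (Q_eq y).symm

lemma Q_nonneg (x : ℝ) : 0 ≤ Q x :=
  setIntegral_nonneg measurableSet_Ioi fun s _ => (phi_pos s).le

lemma Q_anti {x y : ℝ} (h : x ≤ y) : Q y ≤ Q x :=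
  setIntegral_mono_set phi_integrable.integrableOn
    (Filter.Eventually.of_forall fun s => (phi_pos s).le)
    (HasSubset.Subset.eventuallyLE (Ioi_subset_Ioi h))

lemma xQ_le {x : ℝ} (hx : 0 ≤ x) : x * Q x ≤ phi x := by
  have h1 : x * Q x = ∫ s in Ioi x, x * phi s := (integral_const_mul x _).symm
  have h2 : ∫ s in Ioi x, x * phi s ≤ ∫ s in Ioi x, s * phi s := by
    refine setIntegral_mono_on ((phi_integrable.const_mul x).integrableOn)
      (xphi_integrable.integrableOn) measurableSet_Ioi fun s hs => ?_
    exact mul_le_mul_of_nonneg_right (le_of_lt hs) (phi_pos s).le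
  rw [h1]
  calc ∫ s in Ioi x, x * phi s ≤ ∫ s in Ioi x, s * phi s := h2
    _ = phi x := integral_xphi x

end SteinHalf

namespace SteinHalf

lemma expsq_hasDeriv (x : ℝ) :
    HasDerivAt (fun y : ℝ => Real.exp (y^2/2)) (x * Real.exp (x^2/2)) x := by
  have h1 : HasDerivAt (fun y : ℝ => y^2/2) x x := by
    simpa using ((hasDerivAt_pow 2 x).div_const 2).congr_deriv (by ring)
  simpa [mul_comm] using h1.exp

def g2 (x : ℝ) : ℝ := Real.exp (x^2/2) * Q x

lemma g2_hasDeriv (x : ℝ) : HasDerivAt g2 (x * g2 x - 1) x := by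
  have := (expsq_hasDeriv x).mul (Q_hasDeriv x)
  refine this.congr_deriv ?_
  have hphiQ : Real.exp (x^2/2) * phi x = 1 := by
    rw [phi, ← Real.exp_add]; ring_nf; exact Real.exp_zero
  unfold g2
  calc x * Real.exp (x^2/2) * Q x + Real.exp (x^2/2) * -phi x
      = x * (Real.exp (x^2/2) * Q x) - Real.exp (x^2/2) * phi x := by ring
    _ = x * (Real.exp (x^2/2) * Q x) - 1 := by rw [hphiQ]

def Fb (t x : ℝ) : ℝ := Real.exp (x^2/2) * Q (max x t)

def Fb' (t x : ℝ) : ℝ := x * Fb t x - (Ici t).indicator (fun _ => 1) x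

lemma Fb_cont (t : ℝ) : Continuous (Fb t) := by
  unfold Fb
  exact (Real.continuous_exp.comp (by fun_prop)).mul
    (Q_cont.comp (continuous_id.max continuous_const))

lemma Fb'_meas (t : ℝ) : Measurable (Fb' t) := by
  unfold Fb'
  exact (measurable_id.mul (Fb_cont t).measurable).sub
    (measurable_const.indicator measurableSet_Ici)

lemma ind_intervalIntegrable (t a b : ℝ) :
    IntervalIntegrable ((Ici t).indicator (fun _ => (1:ℝ))) volume a b := by
  refine IntervalIntegrable.mono_fun' (g := fun _ => (1:ℝ))
    (intervalIntegrable_const) ?_ ?_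
  · exact ((measurable_const.indicator measurableSet_Ici).aestronglyMeasurable)
  · refine Filter.Eventually.of_forall fun y => ?_
    simp only [Real.norm_eq_abs]
    by_cases hy : y ∈ Ici t <;> simp [Set.indicator_apply, hy]

lemma Fb'_intervalIntegrable (t a b : ℝ) : IntervalIntegrable (Fb' t) volume a b := by
  unfold Fb'
  exact ((continuous_id.mul (Fb_cont t)).intervalIntegrable a b).sub
    (ind_intervalIntegrable t a b)

lemma Fb_bound {t x : ℝ} (hx : 0 ≤ x) : 0 ≤ x * Fb t x ∧ x * Fb t x ≤ 1 := by
  constructor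
  · exact mul_nonneg hx (mul_nonneg (Real.exp_pos _).le (Q_nonneg _))
  · have h1 : Q (max x t) ≤ Q x := Q_anti (le_max_left x t)
    have h2 : x * Fb t x ≤ x * (Real.exp (x^2/2) * Q x) := by
      unfold Fb
      exact mul_le_mul_of_nonneg_left
        (mul_le_mul_of_nonneg_left h1 (Real.exp_pos _).le) hx
    have h3 : x * (Real.exp (x^2/2) * Q x) = Real.exp (x^2/2) * (x * Q x) := by ring
    have h4 : Real.exp (x^2/2) * (x * Q x) ≤ Real.exp (x^2/2) * phi x :=
      mul_le_mul_of_nonneg_left (xQ_le hx) (Real.exp_pos _).le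
    have h5 : Real.exp (x^2/2) * phi x = 1 := by
      rw [phi, ← Real.exp_add]; ring_nf; exact Real.exp_zero
    calc x * Fb t x ≤ x * (Real.exp (x^2/2) * Q x) := h2
      _ = Real.exp (x^2/2) * (x * Q x) := h3
      _ ≤ Real.exp (x^2/2) * phi x := h4
      _ = 1 := h5

end SteinHalf

namespace SteinHalf

lemma g2_cont : Continuous g2 :=
  (Real.continuous_exp.comp (by fun_prop)).mul Q_cont

lemma Fb_FTC1 {t x : ℝ} (hx0 : 0 ≤ x) (hxt : x ≤ t) :
    ∫ y in (0:ℝ)..x, Fb' t y = Real.exp (x^2/2) * Q t - Q t := by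
  have hcongr : ∀ᵐ y : ℝ, y ∈ Set.uIoc (0:ℝ) x → Fb' t y = y * (Real.exp (y^2/2) * Q t) := by
    have hae : ∀ᵐ y : ℝ, y ≠ t := by
      rw [ae_iff]
      have : {y : ℝ | ¬ y ≠ t} = {t} := by ext y; simp
      rw [this]
      exact Real.volume_singleton
    filter_upwards [hae] with y hy hyI
    rw [Set.uIoc_of_le hx0] at hyI
    have hyt : y < t := lt_of_le_of_ne (hyI.2.trans hxt) hy
    rw [Fb', Fb, max_eq_right hyt.le,
      Set.indicator_of_notMem (by simpa using hyt.not_ge : y ∉ Ici t)]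
    ring
  rw [intervalIntegral.integral_congr_ae hcongr]
  have hderiv : ∀ y ∈ uIcc (0:ℝ) x,
      HasDerivAt (fun y => Real.exp (y^2/2) * Q t) (y * (Real.exp (y^2/2) * Q t)) y := by
    intro y _
    exact ((expsq_hasDeriv y).mul_const (Q t)).congr_deriv (by ring)
  rw [intervalIntegral.integral_eq_sub_of_hasDerivAt hderiv
    (Continuous.intervalIntegrable (by fun_prop) _ _)]
  norm_num

lemma Fb_FTC2 {t x : ℝ} (htx : t ≤ x) :
    ∫ y in t..x, Fb' t y = g2 x - g2 t := by
  have hcongr : EqOn (Fb' t) (fun y => y * g2 y - 1) (uIcc t x) := by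
    intro y hy
    rw [uIcc_of_le htx] at hy
    rw [Fb', Fb, max_eq_left hy.1]
    rw [Set.indicator_of_mem (show y ∈ Ici t from hy.1) (fun _ => (1:ℝ))]
    simp only [g2]
  rw [intervalIntegral.integral_congr hcongr]
  exact intervalIntegral.integral_eq_sub_of_hasDerivAt (fun y _ => g2_hasDeriv y)
    (Continuous.intervalIntegrable ((continuous_id.mul g2_cont).sub continuous_const) _ _)

lemma Fb_FTC {t : ℝ} (ht : 0 ≤ t) :
    ∀ x : ℝ, 0 ≤ x → Fb t x = Fb t 0 + ∫ y in (0:ℝ)..x, Fb' t y := by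
  intro x hx
  have hFb0 : Fb t 0 = Q t := by
    rw [Fb, max_eq_right ht]
    norm_num
  rcases le_or_gt x t with hxt | htx
  · rw [Fb_FTC1 hx hxt, hFb0, Fb, max_eq_right hxt]
    ring
  · rw [← intervalIntegral.integral_add_adjacent_intervals
      (Fb'_intervalIntegrable t 0 t) (Fb'_intervalIntegrable t t x),
      Fb_FTC1 ht le_rfl, Fb_FTC2 htx.le, hFb0, Fb, max_eq_left htx.le]
    unfold g2
    ring

end SteinHalf

namespace SteinHalf

lemma backward_cdf (ν : Measure ℝ) [IsProbabilityMeasure ν] (hν : ∀ᵐ x ∂ν, 0 ≤ x)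
    (hP : ∀ f f' : ℝ → ℝ,
        (∀ a b : ℝ, IntervalIntegrable f' volume a b) →
        (∀ x : ℝ, 0 ≤ x → f x = f 0 + ∫ t in (0:ℝ)..x, f' t) →
        Integrable (fun z => f' |z|) (gaussianReal 0 1) →
        ∫ x, f' x ∂ν = (∫ x, x * f x ∂ν) - f 0 * Real.sqrt (2 / π))
    {t : ℝ} (ht : 0 ≤ t) :
    (ν (Ici t)).toReal = Real.sqrt (2 / π) * Q t := by
  have hGint : Integrable (fun z => Fb' t |z|) (gaussianReal 0 1) := by
    refine Integrable.mono' (integrable_const (2:ℝ))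
      (((Fb'_meas t).comp measurable_abs).aestronglyMeasurable) ?_
    refine Filter.Eventually.of_forall fun z => ?_
    rw [Real.norm_eq_abs, Fb']
    have h1 := Fb_bound (t := t) (abs_nonneg z)
    have h2 : (0:ℝ) ≤ (Ici t).indicator (fun _ => (1:ℝ)) |z| ∧
        (Ici t).indicator (fun _ => (1:ℝ)) |z| ≤ 1 := by
      by_cases hz : |z| ∈ Ici t <;> simp [Set.indicator_apply, hz]
    exact abs_le.mpr ⟨by linarith [h1.1, h1.2, h2.1, h2.2],
      by linarith [h1.1, h1.2, h2.1, h2.2]⟩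
  have key := hP (Fb t) (Fb' t) (Fb'_intervalIntegrable t) (Fb_FTC ht) hGint
  have hint1 : Integrable (fun x => x * Fb t x) ν := by
    refine Integrable.mono' (integrable_const (1:ℝ))
      ((measurable_id.mul (Fb_cont t).measurable).aestronglyMeasurable) ?_
    filter_upwards [hν] with x hx
    rw [Real.norm_eq_abs]
    have hb := Fb_bound (t := t) hx
    exact abs_le.mpr ⟨by linarith [hb.1, hb.2], hb.2⟩
  have hint2 : Integrable ((Ici t).indicator (fun _ => (1:ℝ))) ν := by
    rw [integrable_indicator_iff measurableSet_Ici]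
    exact (integrableOn_const_iff).mpr (Or.inr (measure_lt_top ν _))
  have hsub : ∫ x, Fb' t x ∂ν
      = (∫ x, x * Fb t x ∂ν) - ∫ x, (Ici t).indicator (fun _ => (1:ℝ)) x ∂ν := by
    rw [show (fun x => Fb' t x)
        = fun x => x * Fb t x - (Ici t).indicator (fun _ => (1:ℝ)) x from rfl]
    exact integral_sub hint1 hint2
  have hFb0 : Fb t 0 = Q t := by
    rw [Fb, max_eq_right ht]
    norm_num
  have hindint : ∫ x, (Ici t).indicator (fun _ => (1:ℝ)) x ∂ν = (ν (Ici t)).toReal := by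
    rw [integral_indicator_const (1:ℝ) measurableSet_Ici]
    simp
    rfl
  rw [hsub, hindint, hFb0] at key
  have : (ν (Ici t)).toReal = Q t * Real.sqrt (2 / π) := by linarith
  rw [this]; ring

end SteinHalf

theorem stmt3 (ν : Measure ℝ) [IsProbabilityMeasure ν] (hν : ∀ᵐ x ∂ν, 0 ≤ x) :
    ν = (gaussianReal 0 1).map (fun z => |z|) ↔
      ∀ f f' : ℝ → ℝ,
        (∀ a b : ℝ, IntervalIntegrable f' volume a b) →
        (∀ x : ℝ, 0 ≤ x → f x = f 0 + ∫ t in (0:ℝ)..x, f' t) →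
        Integrable (fun z => f' |z|) (gaussianReal 0 1) →
        ∫ x, f' x ∂ν = (∫ x, x * f x ∂ν) - f 0 * Real.sqrt (2 / Real.pi) := by
  constructor
  · rintro rfl
    intro f f' hI hFTC hInt
    exact SteinHalf.forward f f' hI hFTC hInt
  · intro hP
    haveI : IsProbabilityMeasure ((gaussianReal 0 1).map (fun z => |z|)) :=
      Measure.isProbabilityMeasure_map measurable_abs.aemeasurable
    refine Measure.ext_of_Ici ν _ (fun a => ?_)
    rcases le_or_gt 0 a with ha | ha
    · have h1 := SteinHalf.backward_cdf ν hν hP ha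
      have h2 := SteinHalf.backward_cdf ((gaussianReal 0 1).map (fun z => |z|))
        SteinHalf.map_abs_nonneg
        (fun f f' hh1 hh2 hh3 => SteinHalf.forward f f' hh1 hh2 hh3) ha
      exact (ENNReal.toReal_eq_toReal_iff' (measure_ne_top _ _) (measure_ne_top _ _)).mp
        (h1.trans h2.symm)
    · have hn : ∀ (μ' : Measure ℝ), IsProbabilityMeasure μ' → (∀ᵐ x ∂μ', 0 ≤ x) →
          μ' (Ici a) = 1 := by
        intro μ' hpm hμ'
        have h0 : μ' (Iio a) = 0 := by
          refine measure_mono_null (fun x hx => ?_) (ae_iff.mp hμ')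
          exact not_le.mpr (lt_trans hx ha)
        have hc := measure_compl (measurableSet_Iio (a := a)) (measure_ne_top μ' _)
        rw [compl_Iio, h0, tsub_zero, measure_univ] at hc
        exact hc
      rw [hn ν ‹_› hν, hn _ ‹_› SteinHalf.map_abs_nonneg]
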